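/- There exist a finite v⋆ and a finite constant C such that for every nonempty P ⊆ {1,…,d}, every reaction r ∈ R(P), every v ≥ v⋆, and every x such that v·x has strictly positive integer coordinates on P and zero coordinates off P, and v·x + c^r ∈ ℕ₀^d, one has |v · U(x) · log( U(x + v⁻¹ c^r) / U(x) ) − h_r^{(v)}(x)| ≤ C. -/

import Mathlib

open Real Filter Finset Set MeasureTheory
open scoped Classical

noncomputable section

/-- A chemical reaction network on `d` species with `m` reactions. -/
structure CRN (d m : ℕ) where
  cin : Fin m → Fin d → ℕ
  cout : Fin m → Fin d → ℕ
  k : Fin m → ℝ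
  k_pos : ∀ r, 0 < k r

namespace CRN

variable {d m : ℕ}

/-- The reaction vector `c^r = c_out^r - c_in^r`. -/
def cvec (N : CRN d m) (r : Fin m) : Fin d → ℝ := fun i => (N.cout r i : ℝ) - (N.cin r i : ℝ)

/-- Mass-action rate `λ_r`. -/
def lam (N : CRN d m) (r : Fin m) (x : Fin d → ℝ) : ℝ := N.k r * ∏ i, x i ^ (N.cin r i)

/-- Volume-normalized jump rate `Λ_r^{(v)}`. -/
def jump (N : CRN d m) (v : ℝ) (r : Fin m) (x : Fin d → ℝ) : ℝ :=
  N.k r / v ^ (∑ i, N.cin r i) * ∏ i, ∏ l ∈ Finset.range (N.cin r i), (v * x i - (l : ℝ))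

/-- Reactions whose input complex is `w`-maximal among all input complexes. -/
def Rw (N : CRN d m) (w : Fin d → ℝ) : Set (Fin m) :=
  {r | ∀ r', 0 ≤ ∑ i, w i * ((N.cin r i : ℝ) - (N.cin r' i : ℝ))}

/-- Strongly endotactic network. -/
def StronglyEndotactic (N : CRN d m) : Prop :=
  ∀ w : Fin d → ℝ, w ≠ 0 →
    (∃ r ∈ N.Rw w, ∑ i, w i * N.cvec r i < 0) ∧
    ∀ r ∈ N.Rw w, ∑ i, w i * N.cvec r i ≤ 0

/-- A siphon. -/
def IsSiphon (N : CRN d m) (P : Finset (Fin d)) : Prop :=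
  P.Nonempty ∧ ∀ r, (∃ i ∈ P, 0 < N.cout r i) → ∃ i ∈ P, 0 < N.cin r i

/-- Reactions with substrates only from `P`. -/
def RP (N : CRN d m) (P : Finset (Fin d)) : Set (Fin m) := {r | ∀ i ∉ P, N.cin r i = 0}

/-- Reactions of `R(P)` whose input complex is `w`-maximal within `R(P)`. -/
def RPw (N : CRN d m) (P : Finset (Fin d)) (w : Fin d → ℝ) : Set (Fin m) :=
  {r | r ∈ N.RP P ∧ ∀ r' ∈ N.RP P, 0 ≤ ∑ i, w i * ((N.cin r i : ℝ) - (N.cin r' i : ℝ))}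

/-- The products of reaction `r` lie in `P`. -/
def OutIn (N : CRN d m) (P : Finset (Fin d)) (r : Fin m) : Prop := ∀ i ∉ P, N.cout r i = 0

/-- `w`-dissipative reaction. -/
def Dissipative (N : CRN d m) (P : Finset (Fin d)) (w : Fin d → ℝ) (r : Fin m) : Prop :=
  ¬ N.OutIn P r ∨ ∑ i, w i * N.cvec r i < 0

/-- `w`-explosive reaction. -/
def Explosive (N : CRN d m) (P : Finset (Fin d)) (w : Fin d → ℝ) (r : Fin m) : Prop :=
  N.OutIn P r ∧ 0 < ∑ i, w i * N.cvec r i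

end CRN

/-- Chemical Lyapunov function `U(x) = d + 1 + ∑ x_i (log x_i - 1)`. -/
def U (n : ℕ) (x : Fin n → ℝ) : ℝ := n + 1 + ∑ i, x i * (Real.log (x i) - 1)

/-- Euclidean inner product. -/
def dot {n : ℕ} (a b : Fin n → ℝ) : ℝ := ∑ i, a i * b i

namespace CRN

variable {d m : ℕ}

/-- `h_r^{(v)}(x) = ⟨∇_r^{(v)} U(x), c^r⟩`. -/
def hrv (N : CRN d m) (P : Finset (Fin d)) (v : ℝ) (r : Fin m) (x : Fin d → ℝ) : ℝ :=
  ∑ i, (if i ∈ P then Real.log (x i)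
        else if N.cout r i ≠ 0 then Real.log (N.cvec r i / v) else 0) * N.cvec r i

/-- `Q_r^{(v)}(x) = (U(x + v⁻¹ c^r)/U(x))^v`. -/
def Qrv (N : CRN d m) (v : ℝ) (r : Fin m) (x : Fin d → ℝ) : ℝ :=
  (U d (fun i => x i + N.cvec r i / v) / U d x) ^ v

/-- `L_r^{(v)}(x) = U(x) (Q_r^{(v)}(x) - 1)`. -/
def Lrv (N : CRN d m) (v : ℝ) (r : Fin m) (x : Fin d → ℝ) : ℝ :=
  U d x * (N.Qrv v r x - 1)

/-- The modified network `C_{u,P}`: outputs of reactions not in `R(P)_u` are restricted to `P`. -/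
def modify (N : CRN d m) (P : Finset (Fin d)) (u : Fin d → ℝ) : CRN d m where
  cin := N.cin
  cout := fun r i => if i ∈ P ∨ r ∈ N.RPw P u then N.cout r i else 0
  k := N.k
  k_pos := N.k_pos

/-- The nested sets `super_k` of a frame. -/
def superN (N : CRN d m) (P : Finset (Fin d)) {L : ℕ} (wbar : Fin L → Fin d → ℝ) : ℕ → Set (Fin m)
  | 0 => N.RP P
  | (k+1) =>
    if h : k < L then
      {r | r ∈ N.superN P wbar k ∧ ∀ r' ∈ N.superN P wbar k,
        0 ≤ ∑ i, wbar ⟨k, h⟩ i * ((N.cin r i : ℝ) - (N.cin r' i : ℝ))}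
    else N.superN P wbar k

/-- Species reachable in `k` steps starting from reactions with no inputs. -/
def reachSet (N : CRN d m) : ℕ → Set (Fin d)
  | 0 => ∅
  | (k+1) => N.reachSet k ∪
      {i | ∃ r, 0 < N.cout r i ∧ ∀ l, 0 < N.cin r l → l ∈ N.reachSet k}

/-- The Lagrangian `L(λ, ξ)`. -/
def Lagr (N : CRN d m) (lamv : Fin m → ℝ) (ξ : Fin d → ℝ) : ℝ :=
  ⨆ θ : Fin d → ℝ, ((∑ i, θ i * ξ i) - ∑ r, lamv r * (Real.exp (∑ i, θ i * N.cvec r i) - 1))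

end CRN

/-- A frame: an ordered orthonormal family supported on `P`. -/
structure Frame (d : ℕ) (P : Finset (Fin d)) (dstar : ℕ) where
  w : Fin dstar → Fin d → ℝ
  ortho : ∀ k l, dot (w k) (w l) = if k = l then 1 else 0
  suppP : ∀ k, ∀ i ∉ P, w k i = 0

/-- A `(v',P)`-divergent volume-jet framed by `F` and adapted to the network `N`. -/
structure VolJet {d m : ℕ} (N : CRN d m) (P : Finset (Fin d)) {dstar : ℕ}
    (F : Frame d P dstar) (v' : ℝ → ℝ) where
  v : ℕ → ℝ
  θ : ℕ → ℝ
  w : ℕ → Fin d → ℝ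
  θ_gt : ∀ j, 1 < θ j
  θ_top : Tendsto θ atTop atTop
  conic : ∀ j, ∃ a : Fin dstar → ℝ, (∀ k, 0 ≤ a k) ∧ ∀ i, w j i = ∑ k, a k * F.w k i
  unit : ∀ j, dot (w j) (w j) = 1
  beta_ratio : ∀ (k : ℕ) (hk : k + 1 < dstar),
    Tendsto (fun j => dot (w j) (F.w ⟨k + 1, hk⟩) / dot (w j) (F.w ⟨k, Nat.lt_of_succ_lt hk⟩))
      atTop (nhds 0)
  adapted_sign : ∀ r ∈ N.RP P, N.OutIn P r →
    (∀ j, dot (w j) (N.cvec r) < 0) ∨ (∀ j, dot (w j) (N.cvec r) = 0) ∨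
      (∀ j, 0 < dot (w j) (N.cvec r))
  adapted_theta : ∀ k : Fin dstar,
    (∃ L : ℝ, Tendsto (fun j => θ j ^ dot (w j) (F.w k)) atTop (nhds L)) ∨
      Tendsto (fun j => θ j ^ dot (w j) (F.w k)) atTop atTop
  vx_nat : ∀ j, ∀ i ∈ P, ∃ n : ℕ, 0 < n ∧ v j * θ j ^ (w j i) = n
  v_big : ∀ j, v' (∑ i ∈ P, θ j ^ (w j i)) < v j
  x_div : Tendsto (fun j => ∑ i ∈ P, θ j ^ (w j i)) atTop atTop

/-- The spatial trajectory of a volume-jet. -/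
def VolJet.x {d m : ℕ} {N : CRN d m} {P : Finset (Fin d)} {dstar : ℕ} {F : Frame d P dstar}
    {v' : ℝ → ℝ} (J : VolJet N P F v') (j : ℕ) : Fin d → ℝ :=
  fun i => if i ∈ P then J.θ j ^ (J.w j i) else 0

/-- Reachability sets for a polynomial system. -/
def polyReach (d : ℕ) (Q : Fin d → MvPolynomial (Fin d) ℝ) : ℕ → Set (Fin d)
  | 0 => ∅
  | (k+1) => polyReach d Q k ∪
      {i | ∃ s : Fin d →₀ ℕ, 0 < MvPolynomial.coeff s (Q i) ∧ ∀ l, s l ≠ 0 → l ∈ polyReach d Q k}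


section stmt4aux

open Real Finset

private lemma keylem1 (B a c : ℝ) (ha : 1 ≤ a) (hs : 0 ≤ a + c) (hc : |c| ≤ B) :
    |(a+c)*Real.log (a+c) - (a+c)*Real.log a - c| ≤ B^2 + B := by
  have hB0 : 0 ≤ B := le_trans (abs_nonneg c) hc
  have hc1 : -B ≤ c := neg_le_of_abs_le hc
  have hc2 : c ≤ B := le_of_abs_le hc
  have ha0 : 0 < a := lt_of_lt_of_le one_pos ha
  rcases eq_or_lt_of_le hs with h0 | h0
  · rw [← h0]
    have e : (0:ℝ)*Real.log 0 - 0*Real.log a - c = -c := by ring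
    rw [e, abs_neg]
    calc |c| ≤ B := hc
      _ ≤ B^2 + B := by nlinarith [sq_nonneg B]
  · have h1 : a * (Real.log (a+c) - Real.log a) ≤ c := by
      have h := Real.log_le_sub_one_of_pos (div_pos h0 ha0)
      rw [Real.log_div h0.ne' ha0.ne'] at h
      have h2 := mul_le_mul_of_nonneg_left h ha0.le
      have h3 : a * ((a+c)/a - 1) = c := by field_simp; ring
      linarith [h2, h3.le]
    have h2 : c ≤ (a+c) * (Real.log (a+c) - Real.log a) := by
      have h := Real.log_le_sub_one_of_pos (div_pos ha0 h0)
      rw [Real.log_div ha0.ne' h0.ne'] at h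
      have h2 := mul_le_mul_of_nonneg_left h h0.le
      have h3 : (a+c) * (a/(a+c) - 1) = -c := by field_simp; ring
      nlinarith [h2, h3]
    have hE1 : 0 ≤ (a+c)*(Real.log (a+c) - Real.log a) - c := by linarith
    have hE2 : (a+c)*(Real.log (a+c) - Real.log a) - c ≤ c^2 := by
      have := mul_le_mul_of_nonneg_left h1 h0.le
      nlinarith [this, sq_nonneg c]
    have e : (a+c)*Real.log (a+c) - (a+c)*Real.log a - c
        = (a+c)*(Real.log (a+c) - Real.log a) - c := by ring
    rw [e, abs_of_nonneg hE1]
    nlinarith [sq_nonneg c, hE2]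

private lemma keylem2 (t : ℝ) (ht : |t| ≤ 1/2) : |Real.log (1+t) - t| ≤ 2*t^2 := by
  have h1 : -(1/2) ≤ t := neg_le_of_abs_le ht
  have h2 : t ≤ 1/2 := le_of_abs_le ht
  have hpos : (0:ℝ) < 1 + t := by linarith
  have hup : Real.log (1+t) ≤ t := by
    have := Real.log_le_sub_one_of_pos hpos
    linarith
  have hlo : t - 2*t^2 ≤ Real.log (1+t) := by
    have h := Real.log_le_sub_one_of_pos (show (0:ℝ) < 1/(1+t) by positivity)
    rw [one_div, Real.log_inv] at h
    have h3 : 1/(1+t) - 1 ≤ -t + 2*t^2 := by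
      rw [div_sub_one hpos.ne']
      rw [div_le_iff₀ hpos]
      nlinarith [sq_nonneg t]
    rw [one_div] at h3
    linarith
  rw [abs_le]
  constructor <;> nlinarith [sq_nonneg t]

private lemma keylem3 (w : ℝ) (hw : 1 ≤ w) : Real.log w ≤ 2 * Real.sqrt w := by
  have h0 : (0:ℝ) < Real.sqrt w := Real.sqrt_pos.mpr (by linarith)
  have h1 := Real.log_le_sub_one_of_pos h0
  have h2 : Real.log (Real.sqrt w) = Real.log w / 2 := Real.log_sqrt (by linarith)
  linarith

private lemma f_ge (t : ℝ) (ht : 0 ≤ t) : -1 ≤ t * (Real.log t - 1) := by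
  rcases eq_or_lt_of_le ht with h | h
  · rw [← h]; norm_num
  · have hinv := Real.log_le_sub_one_of_pos (inv_pos.mpr h)
    rw [Real.log_inv] at hinv
    have h2 := mul_le_mul_of_nonneg_left hinv h.le
    have h3 : t * (t⁻¹ - 1) = 1 - t := by field_simp
    nlinarith

private lemma f_big (t : ℝ) (ht : Real.exp 2 ≤ t) : t ≤ t * (Real.log t - 1) := by
  have h0 : 0 < t := lt_of_lt_of_le (Real.exp_pos 2) ht
  have h1 : (2:ℝ) ≤ Real.log t := by
    rw [← Real.log_exp 2]
    exact Real.log_le_log (Real.exp_pos 2) ht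
  nlinarith

private lemma U_ge (d : ℕ) (x : Fin d → ℝ) (hx : ∀ i, 0 ≤ x i) : 1 ≤ U d x := by
  have h : (univ : Finset (Fin d)).card • (-1:ℝ) ≤ ∑ i, x i * (Real.log (x i) - 1) :=
    Finset.card_nsmul_le_sum _ _ _ (fun i _ => f_ge _ (hx i))
  rw [Finset.card_univ, Fintype.card_fin, nsmul_eq_mul] at h
  unfold U
  linarith

private lemma U_coord (d : ℕ) (hd : 1 ≤ d) (x : Fin d → ℝ) (hx : ∀ i, 0 ≤ x i) (j : Fin d) :
    2 + x j * (Real.log (x j) - 1) ≤ U d x := by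
  have hsplit : x j * (Real.log (x j) - 1) + ∑ i ∈ univ.erase j, x i * (Real.log (x i) - 1)
      = ∑ i, x i * (Real.log (x i) - 1) :=
    Finset.add_sum_erase _ (fun i => x i * (Real.log (x i) - 1)) (mem_univ j)
  have h : ((univ.erase j).card : ℕ) • (-1:ℝ) ≤ ∑ i ∈ univ.erase j, x i * (Real.log (x i) - 1) :=
    Finset.card_nsmul_le_sum _ _ _ (fun i _ => f_ge _ (hx i))
  rw [Finset.card_erase_of_mem (mem_univ j), Finset.card_univ, Fintype.card_fin,
    nsmul_eq_mul, Nat.cast_sub hd] at h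
  unfold U
  push_cast at h ⊢
  linarith

private lemma log_le_U (d : ℕ) (hd : 1 ≤ d) (x : Fin d → ℝ) (hx : ∀ i, 0 ≤ x i) (j : Fin d) :
    Real.log (x j) ≤ Real.log (U d x) + 2 := by
  have hU := U_ge d x hx
  have hUc := U_coord d hd x hx j
  have hlogU : 0 ≤ Real.log (U d x) := Real.log_nonneg hU
  rcases le_total (x j) (Real.exp 2) with h | h
  · rcases le_or_gt (x j) 0 with h0 | h0
    · have : Real.log (x j) ≤ 0 := by
        rcases eq_or_lt_of_le (hx j) with he | he
        · rw [← he]; simp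
        · linarith [Real.log_nonpos (hx j) (by linarith : x j ≤ 1)]
      linarith
    · have : Real.log (x j) ≤ 2 := by
        rw [← Real.log_exp 2]
        exact Real.log_le_log h0 h
      linarith
  · have hxU : x j ≤ U d x := le_trans (f_big _ h) (by linarith)
    have := Real.log_le_log (lt_of_lt_of_le (Real.exp_pos 2) h) hxU
    linarith

end stmt4aux

set_option maxHeartbeats 1000000

theorem stmt4 {d m : ℕ} (N : CRN d m) :
    ∃ (vstar C : ℝ), ∀ P : Finset (Fin d), P.Nonempty → ∀ r ∈ N.RP P, ∀ v ≥ vstar,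
      ∀ x : Fin d → ℝ, (∀ i ∈ P, ∃ n : ℕ, 0 < n ∧ x i = (n : ℝ) / v) →
        (∀ i ∉ P, x i = 0) → (∀ i, 0 ≤ v * x i + N.cvec r i) →
        |v * U d x * Real.log (U d (fun i => x i + N.cvec r i / v) / U d x) - N.hrv P v r x|
          ≤ C := by
  classical
  set B : ℝ := (∑ r : Fin m, ∑ i : Fin d, ((N.cin r i : ℝ) + (N.cout r i : ℝ))) + 1 with hBdef
  have hB1 : (1:ℝ) ≤ B := by
    have h : 0 ≤ ∑ r : Fin m, ∑ i : Fin d, ((N.cin r i : ℝ) + (N.cout r i : ℝ)) := by positivity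
    rw [hBdef]; linarith
  have hB0 : (0:ℝ) ≤ B := by linarith
  have hbound : ∀ (r : Fin m) (i : Fin d), ((N.cin r i:ℝ) + (N.cout r i : ℝ)) + 1 ≤ B := by
    intro r i
    have h1 : ((N.cin r i:ℝ) + (N.cout r i:ℝ)) ≤ ∑ i', ((N.cin r i':ℝ) + (N.cout r i':ℝ)) :=
      Finset.single_le_sum (f := fun i' => ((N.cin r i':ℝ) + (N.cout r i':ℝ)))
        (fun j _ => by positivity) (Finset.mem_univ i)
    have h2 : (∑ i', ((N.cin r i':ℝ) + (N.cout r i':ℝ)))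
        ≤ ∑ r', ∑ i', ((N.cin r' i':ℝ) + (N.cout r' i':ℝ)) :=
      Finset.single_le_sum (f := fun r' => ∑ i', ((N.cin r' i':ℝ) + (N.cout r' i':ℝ)))
        (fun j _ => by positivity) (Finset.mem_univ r)
    rw [hBdef]; linarith
  have hcvec : ∀ (r : Fin m) (i : Fin d), |N.cvec r i| ≤ B := by
    intro r i
    have h := hbound r i
    have h1 : (0:ℝ) ≤ (N.cin r i : ℝ) := Nat.cast_nonneg _
    have h2 : (0:ℝ) ≤ (N.cout r i : ℝ) := Nat.cast_nonneg _
    simp only [CRN.cvec]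
    rw [abs_le]; constructor <;> linarith
  set K2 : ℝ := (d:ℝ) * (B^2 + B) with hK2def
  have hK20 : 0 ≤ K2 := by rw [hK2def]; positivity
  set S1 : ℝ := 6*(d:ℝ)*B + K2 + 2 with hS1def
  have hS12 : 2 ≤ S1 := by
    have : 0 ≤ 6*(d:ℝ)*B := by positivity
    rw [hS1def]; linarith
  have hS10 : 0 ≤ S1 := by linarith
  clear_value B K2 S1
  refine ⟨(2*S1)^2 + B + 1, K2 + 2*S1^2 + 1, ?_⟩
  intro P hP r hr v hv x hxP hx0 hpos
  obtain ⟨i0, _⟩ := hP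
  have hd1 : 1 ≤ d := i0.pos
  have hv1 : (1:ℝ) ≤ v := by linarith [sq_nonneg (2*S1), hv]
  have hv0 : (0:ℝ) < v := by linarith
  have hvB : B ≤ v := by linarith [sq_nonneg (2*S1), hv]
  have hvsq : 2*S1 ≤ Real.sqrt v := by
    have h1 : (2*S1)^2 ≤ v := by linarith
    calc 2*S1 = Real.sqrt ((2*S1)^2) := (Real.sqrt_sq (by linarith)).symm
      _ ≤ Real.sqrt v := Real.sqrt_le_sqrt h1
  have hxnn : ∀ i, 0 ≤ x i := by
    intro i
    by_cases hi : i ∈ P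
    · obtain ⟨n, hn, hxi⟩ := hxP i hi
      rw [hxi]; positivity
    · rw [hx0 i hi]
  set y : Fin d → ℝ := fun i => x i + N.cvec r i / v with hy
  clear_value y
  have hynn : ∀ i, 0 ≤ y i := by
    intro i
    have h := hpos i
    have hvy : v * y i = v * x i + N.cvec r i := by
      simp only [hy]; field_simp
    by_contra hlt
    push_neg at hlt
    linarith [mul_neg_of_pos_of_neg hv0 hlt, hvy, h]
  have hU1 : 1 ≤ U d x := U_ge d x hxnn
  have hUy1 : 1 ≤ U d y := U_ge d y hynn
  have hu0 : (0:ℝ) < U d x := by linarith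
  set A : ℝ := v * (U d y - U d x) with hA
  clear_value A
  -- Step 1 : |A - hrv| ≤ K2
  have hsum : A - N.hrv P v r x = ∑ i,
      (v * (y i * (Real.log (y i) - 1) - x i * (Real.log (x i) - 1)) -
        (if i ∈ P then Real.log (x i)
          else if N.cout r i ≠ 0 then Real.log (N.cvec r i / v) else 0) * N.cvec r i) := by
    have e1 : U d y - U d x = ∑ i, (y i * (Real.log (y i) - 1) - x i * (Real.log (x i) - 1)) := by
      rw [Finset.sum_sub_distrib]
      simp only [U]; ring
    rw [hA, e1, Finset.mul_sum, CRN.hrv, ← Finset.sum_sub_distrib]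
  have hterm : ∀ i ∈ (Finset.univ : Finset (Fin d)),
      |v * (y i * (Real.log (y i) - 1) - x i * (Real.log (x i) - 1)) -
        (if i ∈ P then Real.log (x i)
          else if N.cout r i ≠ 0 then Real.log (N.cvec r i / v) else 0) * N.cvec r i|
      ≤ B^2 + B := by
    intro i _
    by_cases hi : i ∈ P
    · obtain ⟨n, hn, hxi⟩ := hxP i hi
      have hn1 : (1:ℝ) ≤ (n:ℝ) := by exact_mod_cast hn
      have hnpos : (0:ℝ) < (n:ℝ) := by linarith
      have hsc : 0 ≤ (n:ℝ) + N.cvec r i := by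
        have h := hpos i
        rw [hxi] at h
        have e : v * ((n:ℝ)/v) = (n:ℝ) := by field_simp
        linarith [h, e.ge]
      simp only [if_pos hi]
      have hyi : y i = ((n:ℝ) + N.cvec r i)/v := by
        simp only [hy, hxi]; field_simp
      rcases eq_or_lt_of_le hsc with h0 | h0
      · have hcn : N.cvec r i = -(n:ℝ) := by linarith
        have hyi0 : y i = 0 := by rw [hyi, ← h0]; simp
        have e : v * (y i * (Real.log (y i) - 1) - x i * (Real.log (x i) - 1)) -
            Real.log (x i) * N.cvec r i = (n:ℝ) := by
          have h2 : v * ((n:ℝ)/v) = (n:ℝ) := by field_simp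
          rw [hyi0, hxi, hcn]
          linear_combination (1 - Real.log ((n:ℝ)/v)) * h2
        rw [e, abs_of_nonneg hnpos.le]
        have hcB := hcvec r i
        rw [hcn, abs_neg, abs_of_nonneg hnpos.le] at hcB
        linarith [sq_nonneg B, hcB]
      · have key := keylem1 B (n:ℝ) (N.cvec r i) hn1 hsc (hcvec r i)
        have e : v * (y i * (Real.log (y i) - 1) - x i * (Real.log (x i) - 1)) -
            Real.log (x i) * N.cvec r i
            = ((n:ℝ)+N.cvec r i)*Real.log ((n:ℝ)+N.cvec r i)
              - ((n:ℝ)+N.cvec r i)*Real.log (n:ℝ) - N.cvec r i := by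
          have h1 : v * (((n:ℝ) + N.cvec r i)/v) = (n:ℝ) + N.cvec r i := by field_simp
          have h2 : v * ((n:ℝ)/v) = (n:ℝ) := by field_simp
          rw [hyi, hxi, Real.log_div h0.ne' hv0.ne', Real.log_div hnpos.ne' hv0.ne']
          linear_combination (Real.log ((n:ℝ) + N.cvec r i) - Real.log v - 1) * h1
            - (Real.log (n:ℝ) - Real.log v - 1) * h2
        rw [e]; exact key
    · have hxi : x i = 0 := hx0 i hi
      have hcin : N.cin r i = 0 := hr i hi
      have hcout0 : N.cvec r i = (N.cout r i : ℝ) := by simp [CRN.cvec, hcin]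
      simp only [if_neg hi]
      by_cases hco : N.cout r i ≠ 0
      · simp only [if_pos hco]
        have hc1 : (1:ℝ) ≤ N.cvec r i := by
          rw [hcout0]
          exact_mod_cast Nat.one_le_iff_ne_zero.mpr hco
        have hyi : y i = N.cvec r i / v := by simp [hy, hxi]
        have e : v * (y i * (Real.log (y i) - 1) - x i * (Real.log (x i) - 1)) -
            Real.log (N.cvec r i / v) * N.cvec r i = -(N.cvec r i) := by
          have hvc : v * (N.cvec r i / v) = N.cvec r i := by field_simp
          rw [hyi, hxi]
          linear_combination (Real.log (N.cvec r i / v) - 1) * hvc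
        rw [e, abs_neg, abs_of_nonneg (by linarith : (0:ℝ) ≤ N.cvec r i)]
        have hcB := le_of_abs_le (hcvec r i)
        linarith [sq_nonneg B, hcB]
      · simp only [if_neg hco]
        push_neg at hco
        have hc0 : N.cvec r i = 0 := by rw [hcout0, hco]; simp
        have hyi : y i = 0 := by simp [hy, hxi, hc0]
        have e : v * (y i * (Real.log (y i) - 1) - x i * (Real.log (x i) - 1)) -
            0 * N.cvec r i = 0 := by
          rw [hyi, hxi]; ring
        rw [e]
        simp only [abs_zero]
        positivity
  have hAhrv : |A - N.hrv P v r x| ≤ K2 := by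
    rw [hsum]
    calc |∑ i, _| ≤ ∑ i, |v * (y i * (Real.log (y i) - 1) - x i * (Real.log (x i) - 1)) -
        (if i ∈ P then Real.log (x i)
          else if N.cout r i ≠ 0 then Real.log (N.cvec r i / v) else 0) * N.cvec r i| :=
        Finset.abs_sum_le_sum_abs _ _
      _ ≤ ∑ _i : Fin d, (B^2 + B) := Finset.sum_le_sum hterm
      _ = (d:ℝ) * (B^2 + B) := by
        rw [Finset.sum_const, Finset.card_univ, Fintype.card_fin, nsmul_eq_mul]
      _ = K2 := hK2def.symm
  -- Step 2 : hrv bound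
  set L : ℝ := Real.log v + Real.log (U d x) + 2 with hLdef
  clear_value L
  have hlogv0 : 0 ≤ Real.log v := Real.log_nonneg hv1
  have hlogU0 : 0 ≤ Real.log (U d x) := Real.log_nonneg hU1
  have hL0 : 0 ≤ L := by rw [hLdef]; linarith
  have hcoeff : ∀ i : Fin d,
      |(if i ∈ P then Real.log (x i)
        else if N.cout r i ≠ 0 then Real.log (N.cvec r i / v) else 0)| ≤ L := by
    intro i
    by_cases hi : i ∈ P
    · simp only [if_pos hi]
      obtain ⟨n, hn, hxi⟩ := hxP i hi
      have hn1 : (1:ℝ) ≤ (n:ℝ) := by exact_mod_cast hn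
      have hnpos : (0:ℝ) < (n:ℝ) := by linarith
      rw [abs_le]
      constructor
      · rw [hxi, Real.log_div hnpos.ne' hv0.ne']
        have := Real.log_nonneg hn1
        rw [hLdef]; linarith
      · rcases le_total (x i) 1 with h | h
        · have := Real.log_nonpos (hxnn i) h
          rw [hLdef]; linarith
        · have := log_le_U d hd1 x hxnn i
          rw [hLdef]; linarith
    · simp only [if_neg hi]
      by_cases hco : N.cout r i ≠ 0
      · simp only [if_pos hco]
        have hcin : N.cin r i = 0 := hr i hi
        have hcout0 : N.cvec r i = (N.cout r i : ℝ) := by simp [CRN.cvec, hcin]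
        have hc1 : (1:ℝ) ≤ N.cvec r i := by
          rw [hcout0]
          exact_mod_cast Nat.one_le_iff_ne_zero.mpr hco
        have hcv : N.cvec r i ≤ v := le_trans (le_of_abs_le (hcvec r i)) hvB
        rw [abs_le]
        constructor
        · rw [Real.log_div (by linarith) hv0.ne']
          have := Real.log_nonneg hc1
          rw [hLdef]; linarith
        · have h1 : N.cvec r i / v ≤ 1 := by
            rw [div_le_one hv0]; exact hcv
          have h0 : 0 ≤ N.cvec r i / v := by positivity
          have := Real.log_nonpos h0 h1
          rw [hLdef]; linarith
      · simp only [if_neg hco, abs_zero]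
        exact hL0
  have hhrv : |N.hrv P v r x| ≤ (d:ℝ) * (L * B) := by
    rw [CRN.hrv]
    calc |∑ i, _| ≤ ∑ i, |(if i ∈ P then Real.log (x i)
        else if N.cout r i ≠ 0 then Real.log (N.cvec r i / v) else 0) * N.cvec r i| :=
        Finset.abs_sum_le_sum_abs _ _
      _ ≤ ∑ _i : Fin d, L * B := by
        apply Finset.sum_le_sum
        intro i _
        rw [abs_mul]
        exact mul_le_mul (hcoeff i) (hcvec r i) (abs_nonneg _) hL0
      _ = (d:ℝ) * (L * B) := by
        rw [Finset.sum_const, Finset.card_univ, Fintype.card_fin, nsmul_eq_mul]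
  -- Step 3-4 : |A| ≤ S1 * (√v * √(U d x))
  have hAb1 : |A| ≤ (d:ℝ) * (L * B) + K2 := by
    calc |A| = |(A - N.hrv P v r x) + N.hrv P v r x| := by ring_nf
      _ ≤ |A - N.hrv P v r x| + |N.hrv P v r x| := abs_add_le _ _
      _ ≤ K2 + (d:ℝ) * (L * B) := add_le_add hAhrv hhrv
      _ = (d:ℝ) * (L * B) + K2 := by ring
  have hs1 : 1 ≤ Real.sqrt v := by
    rw [show (1:ℝ) = Real.sqrt 1 from Real.sqrt_one.symm]
    exact Real.sqrt_le_sqrt hv1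
  have ht1 : 1 ≤ Real.sqrt (U d x) := by
    rw [show (1:ℝ) = Real.sqrt 1 from Real.sqrt_one.symm]
    exact Real.sqrt_le_sqrt hU1
  have hs0 : 0 ≤ Real.sqrt v := Real.sqrt_nonneg v
  have ht0 : 0 ≤ Real.sqrt (U d x) := Real.sqrt_nonneg _
  have hAb2 : |A| ≤ S1 * (Real.sqrt v * Real.sqrt (U d x)) := by
    have hLb : L ≤ 2 * Real.sqrt v + 2 * Real.sqrt (U d x) + 2 := by
      rw [hLdef]
      have := keylem3 v hv1
      have := keylem3 (U d x) hU1
      linarith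
    have hdB0 : (0:ℝ) ≤ (d:ℝ) * B := by positivity
    have h1 : (d:ℝ) * (L * B) ≤ ((d:ℝ)*B) * (2 * Real.sqrt v + 2 * Real.sqrt (U d x) + 2) := by
      have := mul_le_mul_of_nonneg_left hLb hdB0
      nlinarith [this]
    have p1 : 0 ≤ ((d:ℝ)*B) * (Real.sqrt v * Real.sqrt (U d x) - Real.sqrt v) := by
      apply mul_nonneg hdB0
      nlinarith [mul_le_mul_of_nonneg_left ht1 hs0]
    have p2 : 0 ≤ ((d:ℝ)*B) * (Real.sqrt v * Real.sqrt (U d x) - Real.sqrt (U d x)) := by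
      apply mul_nonneg hdB0
      nlinarith [mul_le_mul_of_nonneg_right hs1 ht0]
    have p3 : (1:ℝ) ≤ Real.sqrt v * Real.sqrt (U d x) := by nlinarith
    have p4 : 0 ≤ ((d:ℝ)*B) * (Real.sqrt v * Real.sqrt (U d x) - 1) := by
      apply mul_nonneg hdB0; linarith
    have p5 : 0 ≤ K2 * (Real.sqrt v * Real.sqrt (U d x) - 1) := by
      apply mul_nonneg hK20; linarith
    rw [hS1def]
    linarith [hAb1, h1, p1, p2, p3, p4, p5]
  have hss : Real.sqrt v * Real.sqrt v = v := Real.mul_self_sqrt hv0.le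
  have htt : Real.sqrt (U d x) * Real.sqrt (U d x) = U d x := Real.mul_self_sqrt (by linarith)
  -- Step 5 : |T| ≤ 1/2
  set T : ℝ := (U d y - U d x) / U d x with hT
  clear_value T
  have hTA : T = A / (v * U d x) := by
    rw [hT, hA]; field_simp
  have hvu0 : (0:ℝ) < v * U d x := by positivity
  have habsT : |T| ≤ 1/2 := by
    rw [hTA, abs_div, abs_of_pos hvu0, div_le_iff₀ hvu0]
    have h1 : 2*S1 ≤ Real.sqrt v * Real.sqrt (U d x) := by
      calc 2*S1 ≤ Real.sqrt v := hvsq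
        _ = Real.sqrt v * 1 := (mul_one _).symm
        _ ≤ Real.sqrt v * Real.sqrt (U d x) := by
          exact mul_le_mul_of_nonneg_left ht1 hs0
    have h3 : 2*(S1*(Real.sqrt v * Real.sqrt (U d x)))
        ≤ (Real.sqrt v * Real.sqrt (U d x)) * (Real.sqrt v * Real.sqrt (U d x)) := by
      have h5 := mul_le_mul_of_nonneg_left h1 (mul_nonneg hs0 ht0)
      linarith [h5]
    have h4 : (Real.sqrt v * Real.sqrt (U d x)) * (Real.sqrt v * Real.sqrt (U d x))
        = v * U d x := by
      calc (Real.sqrt v * Real.sqrt (U d x)) * (Real.sqrt v * Real.sqrt (U d x))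
          = (Real.sqrt v * Real.sqrt v) * (Real.sqrt (U d x) * Real.sqrt (U d x)) := by ring
        _ = v * U d x := by rw [hss, htt]
    linarith [hAb2, h3, h4]
  -- Step 6 : conclusion
  have hratio : U d y / U d x = 1 + T := by
    rw [hT]; field_simp; ring
  have hvuT : v * U d x * T = A := by
    rw [hT, hA]; field_simp
  have hkey2 := keylem2 T habsT
  have hA2 : A^2 ≤ S1^2 * (v * U d x) := by
    have q := mul_self_le_mul_self (abs_nonneg A) hAb2
    rw [abs_mul_abs_self] at q
    have e : (S1 * (Real.sqrt v * Real.sqrt (U d x))) * (S1 * (Real.sqrt v * Real.sqrt (U d x)))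
        = S1^2 * ((Real.sqrt v * Real.sqrt v) * (Real.sqrt (U d x) * Real.sqrt (U d x))) := by
      ring
    rw [e, hss, htt] at q
    rw [pow_two]
    linarith [q]
  have hT2 : v * U d x * (2*T^2) ≤ 2*S1^2 := by
    have e : v * U d x * (2*T^2) = 2 * A^2 / (v * U d x) := by
      rw [hTA]; field_simp
    rw [e, div_le_iff₀ hvu0]
    linarith [hA2]
  have hgoal : v * U d x * Real.log (U d y / U d x) - N.hrv P v r x
      = v * U d x * (Real.log (1+T) - T) + (A - N.hrv P v r x) := by
    rw [hratio, ← hvuT]; ring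
  rw [hgoal]
  calc |v * U d x * (Real.log (1+T) - T) + (A - N.hrv P v r x)|
      ≤ |v * U d x * (Real.log (1+T) - T)| + |A - N.hrv P v r x| := abs_add_le _ _
    _ ≤ v * U d x * (2*T^2) + K2 := by
        rw [abs_mul, abs_of_pos hvu0]
        exact add_le_add (mul_le_mul_of_nonneg_left hkey2 hvu0.le) hAhrv
    _ ≤ 2*S1^2 + K2 := by linarith [hT2]
    _ ≤ K2 + 2*S1^2 + 1 := by linarith


end
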